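/- For real a and x ≥ 0, ∫₀ˣ (e^{−t}/√t) cosh(a√t) dt = (√π/2) e^{a²/4} [erf(a/2 + √x) − erf(a/2 − √x)]. -/

import Mathlib

open MeasureTheory Real

open Set intervalIntegral

/-- The error function `erf(x) = (2/√π) ∫₀ˣ e^{−t²} dt`. -/
noncomputable def erf (x : ℝ) : ℝ :=
  (2 / Real.sqrt Real.pi) * ∫ t in (0:ℝ)..x, Real.exp (-t ^ 2)

/-- `∫₀ˣ (e^{−t}/√t) cosh(a√t) dt = (√π/2) e^{a²/4} [erf(a/2+√x) − erf(a/2−√x)]`. -/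
theorem integral_cosh_sqrt (a x : ℝ) (hx : 0 ≤ x) :
    ∫ t in (0:ℝ)..x, Real.exp (-t) / Real.sqrt t * Real.cosh (a * Real.sqrt t)
      = Real.sqrt Real.pi / 2 * Real.exp (a ^ 2 / 4)
          * (erf (a / 2 + Real.sqrt x) - erf (a / 2 - Real.sqrt x)) := by
  set g : ℝ → ℝ := fun t => Real.exp (-t) / Real.sqrt t * Real.cosh (a * Real.sqrt t) with hg
  set c := Real.sqrt x with hc
  have hc0 : 0 ≤ c := Real.sqrt_nonneg x
  have hcx : c ^ 2 = x := Real.sq_sqrt hx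
  -- Step 1: integrability of g on Ioc 0 x
  have hg_int : IntegrableOn g (Set.Ioc 0 x) := by
    have hdom : IntegrableOn (fun t : ℝ => Real.cosh (|a| * c) * t ^ (-(1/2) : ℝ))
        (Set.Ioc 0 x) := by
      have h1 : IntervalIntegrable (fun t : ℝ => t ^ (-(1/2):ℝ)) volume 0 x :=
        intervalIntegrable_rpow' (by norm_num)
      have := (h1.const_mul (Real.cosh (|a| * c)))
      simpa [intervalIntegrable_iff_integrableOn_Ioc_of_le hx] using this
    refine hdom.integrable.mono' ?_ ?_
    · apply Measurable.aestronglyMeasurable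
      rw [hg]
      fun_prop
    · rw [ae_restrict_iff' measurableSet_Ioc]
      filter_upwards with t ht
      obtain ⟨ht0, htx⟩ := ht
      have hst : 0 < Real.sqrt t := Real.sqrt_pos.mpr ht0
      have h1 : Real.exp (-t) / Real.sqrt t ≤ t ^ (-(1/2):ℝ) := by
        rw [Real.rpow_neg ht0.le, ← Real.sqrt_eq_rpow]
        rw [div_le_iff₀ hst, inv_mul_cancel₀ hst.ne']
        exact Real.exp_le_one_iff.mpr (by linarith)
      have h2 : Real.cosh (a * Real.sqrt t) ≤ Real.cosh (|a| * c) := by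
        rw [Real.cosh_le_cosh]
        calc |a * Real.sqrt t| = |a| * Real.sqrt t := by
              rw [abs_mul, abs_of_nonneg (Real.sqrt_nonneg t)]
          _ ≤ |a| * c := mul_le_mul_of_nonneg_left (Real.sqrt_le_sqrt htx) (abs_nonneg a)
          _ ≤ |(|a| * c)| := le_abs_self _
      have hg0 : 0 ≤ g t := by
        apply mul_nonneg (div_nonneg (Real.exp_nonneg _) (Real.sqrt_nonneg _))
        exact (Real.cosh_pos _).le
      rw [Real.norm_of_nonneg hg0]
      calc g t ≤ t ^ (-(1/2):ℝ) * Real.cosh (|a| * c) := by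
            apply mul_le_mul h1 h2 (Real.cosh_pos _).le (Real.rpow_nonneg ht0.le _)
        _ = Real.cosh (|a| * c) * t ^ (-(1/2):ℝ) := mul_comm _ _
  -- Step 2: substitution t = s²
  have hsub : (∫ s in (0:ℝ)..c, (2 * s) • g (s^2)) = ∫ t in (0:ℝ)..x, g t := by
    have h := intervalIntegral.integral_comp_smul_deriv''' (f := fun s : ℝ => s ^ 2)
      (f' := fun s => 2 * s) (g := g) (a := 0) (b := c)
      (by fun_prop)
      (fun s _ => by simpa using ((hasDerivAt_pow 2 s).hasDerivWithinAt (s := Set.Ioi s)))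
      ?_ ?_ ?_
    · simpa [hcx] using h
    · have himg : (fun s : ℝ => s ^ 2) '' Set.Ioo (min 0 c) (max 0 c) ⊆ Set.Ioi 0 := by
        rintro _ ⟨s, hs, rfl⟩
        rw [min_eq_left hc0, max_eq_right hc0] at hs
        exact pow_pos hs.1 2
      refine ContinuousOn.mono ?_ himg
      rw [hg]
      apply ContinuousOn.mul
      · exact ((Real.continuous_exp.comp continuous_neg).continuousOn).div
          Real.continuous_sqrt.continuousOn
          (fun t ht => (Real.sqrt_pos.mpr ht).ne')
      · fun_prop
    · have himg : (fun s : ℝ => s ^ 2) '' Set.uIcc 0 c ⊆ Set.Icc 0 x := by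
        rintro _ ⟨s, hs, rfl⟩
        rw [Set.uIcc_of_le hc0] at hs
        exact ⟨sq_nonneg s, by rw [← hcx]; exact pow_le_pow_left₀ hs.1 hs.2 2⟩
      exact (((integrableOn_Icc_iff_integrableOn_Ioc).mpr hg_int).mono_set himg)
    · have hcont : Continuous (fun s : ℝ => 2 * Real.exp (-s^2) * Real.cosh (a * s)) := by
        fun_prop
      apply (hcont.integrableOn_uIcc).congr
      rw [Set.uIcc_of_le hc0]
      rw [← MeasureTheory.restrict_Ioc_eq_restrict_Icc]
      rw [Filter.EventuallyEq, ae_restrict_iff' measurableSet_Ioc]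
      filter_upwards with s hs
      obtain ⟨hs0, hsc⟩ := hs
      simp only [hg, Function.comp, smul_eq_mul]
      rw [Real.sqrt_sq hs0.le]
      field_simp [Real.exp_ne_zero, hs0.ne']
  rw [← hsub]
  -- Step 3: rewrite the integrand as a sum of shifted Gaussians
  rw [intervalIntegral.integral_congr_ae (g := fun s =>
      Real.exp (a^2/4) * (Real.exp (-(s - a/2)^2) + Real.exp (-(s + a/2)^2)))]
  swap
  · filter_upwards with s hs
    have hmem : s ∈ Set.Ioc 0 c := by rwa [Set.uIoc_of_le hc0] at hs
    simp only [hg, smul_eq_mul]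
    rw [Real.sqrt_sq hmem.1.le, Real.cosh_eq]
    rw [mul_add, ← Real.exp_add, ← Real.exp_add,
      show a^2/4 + -(s - a/2)^2 = -s^2 + a*s by ring,
      show a^2/4 + -(s + a/2)^2 = -s^2 + -(a*s) by ring,
      Real.exp_add, Real.exp_add]
    field_simp [hmem.1.ne']
  -- Step 4: evaluate the Gaussian integrals in terms of erf
  set G : ℝ → ℝ := fun y => ∫ t in (0:ℝ)..y, Real.exp (-t ^ 2) with hG
  have hgauss : Continuous fun t : ℝ => Real.exp (-t ^ 2) := by fun_prop
  have hGint : ∀ p q : ℝ, IntervalIntegrable (fun t : ℝ => Real.exp (-t ^ 2)) volume p q :=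
    fun p q => hgauss.intervalIntegrable p q
  have hGsub : ∀ p q : ℝ, (∫ t in p..q, Real.exp (-t ^ 2)) = G q - G p := by
    intro p q
    rw [hG]
    rw [← intervalIntegral.integral_interval_sub_left (hGint 0 q) (hGint 0 p)]
  have hGodd : ∀ y : ℝ, G (-y) = - G y := by
    intro y
    have h := intervalIntegral.integral_comp_neg (a := y) (b := 0)
      (f := fun t : ℝ => Real.exp (-t ^ 2))
    simp only [neg_neg, neg_sq, neg_zero] at h
    rw [hG]
    simp only []
    rw [← h, intervalIntegral.integral_symm]
  have h1 : (∫ s in (0:ℝ)..c, Real.exp (-(s - a/2)^2)) = G (c - a/2) - G (-(a/2)) := by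
    rw [intervalIntegral.integral_comp_sub_right (fun u => Real.exp (-u^2)) (a/2)]
    rw [zero_sub, hGsub]
  have h2 : (∫ s in (0:ℝ)..c, Real.exp (-(s + a/2)^2)) = G (c + a/2) - G (a/2) := by
    rw [intervalIntegral.integral_comp_add_right (fun u => Real.exp (-u^2)) (a/2)]
    rw [zero_add, hGsub]
  rw [intervalIntegral.integral_const_mul, intervalIntegral.integral_add
    ((by fun_prop : Continuous fun s : ℝ => Real.exp (-(s - a/2)^2)).intervalIntegrable 0 c)
    ((by fun_prop : Continuous fun s : ℝ => Real.exp (-(s + a/2)^2)).intervalIntegrable 0 c),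
    h1, h2]
  have herf : ∀ y : ℝ, erf y = 2 / Real.sqrt Real.pi * G y := fun y => rfl
  have hsqpi : Real.sqrt Real.pi ≠ 0 := (Real.sqrt_ne_zero'.mpr Real.pi_pos)
  rw [herf, herf, hGodd (a/2)]
  have e1 : G (a/2 - c) = - G (c - a/2) := by rw [show a/2 - c = -(c - a/2) by ring, hGodd]
  rw [e1]
  have e2 : G (a/2 + c) = G (c + a/2) := by ring_nf
  rw [e2]
  field_simp
  ring
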